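/- Let r ≥ 1 be an integer, set d = 2r, and let I ⊆ [n] with |I| ≤ d. For every ε ∈ (0,1), if n ≥ 4d²·2^{2d}·(3 − ln ε)², then for G ← G(n,1/2), conditioned on the event that I is a clique of G, the probability that |deg_G(I) − 2^{C(|I|,2) − C(d,2)}·C(n−|I|, d−|I|)| > 8·(3 − ln ε)·n^{d−|I|−1/2} is less than ε. -/

import Mathlib

open Finset

private lemma exp_le_add_exp_sq (x : ℝ) : Real.exp x ≤ x + Real.exp (x ^ 2) := by
  rcases le_or_gt x (-1) with h | h
  · have h1 : Real.exp x ≤ 1 := Real.exp_le_one_iff.2 (by linarith)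
    have h2 : x ^ 2 + 1 ≤ Real.exp (x ^ 2) := Real.add_one_le_exp _
    nlinarith
  rcases le_or_gt 1 x with h' | h'
  · have h1 : Real.exp x ≤ Real.exp (x ^ 2) := Real.exp_le_exp.2 (by nlinarith)
    linarith
  · have hx : |x| ≤ 1 := abs_le.2 ⟨by linarith, by linarith⟩
    have h2 := Real.exp_bound hx (by norm_num : 0 < 2)
    have h3 : |Real.exp x - (1 + x)| ≤ x ^ 2 * (3 / 4) := by
      have : ∑ m ∈ Finset.range 2, x ^ m / (m.factorial : ℝ) = 1 + x := by
        simp [Finset.sum_range_succ]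
      rw [this] at h2
      calc |Real.exp x - (1 + x)| ≤ |x| ^ 2 * ((2 + 1 : ℕ) / ((2:ℕ).factorial * 2) : ℝ) := by
            simpa using h2
        _ = x ^ 2 * (3 / 4) := by rw [sq_abs]; norm_num [Nat.factorial]
    have h4 : x ^ 2 + 1 ≤ Real.exp (x ^ 2) := Real.add_one_le_exp _
    have h5 := abs_le.1 h3
    nlinarith

private lemma avg_exp_le {α : Type*} [Fintype α] (Z : α → ℝ) (c l : ℝ)
    (h0 : ∑ a, Z a = 0) (hb : ∀ a, |Z a| ≤ c) :
    ∑ a, Real.exp (l * Z a) ≤ (Fintype.card α : ℝ) * Real.exp (l ^ 2 * c ^ 2) := by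
  have key : ∀ a, Real.exp (l * Z a) ≤ l * Z a + Real.exp (l ^ 2 * c ^ 2) := by
    intro a
    have h1 := exp_le_add_exp_sq (l * Z a)
    have h2 : (l * Z a) ^ 2 ≤ l ^ 2 * c ^ 2 := by
      have : Z a ^ 2 ≤ c ^ 2 := by
        have := hb a
        nlinarith [sq_abs (Z a), abs_nonneg (Z a)]
      nlinarith [sq_nonneg l]
    have h3 : Real.exp ((l * Z a) ^ 2) ≤ Real.exp (l ^ 2 * c ^ 2) := Real.exp_le_exp.2 h2
    linarith
  calc ∑ a, Real.exp (l * Z a) ≤ ∑ a, (l * Z a + Real.exp (l ^ 2 * c ^ 2)) :=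
        Finset.sum_le_sum fun a _ => key a
    _ = l * (∑ a, Z a) + (Fintype.card α : ℝ) * Real.exp (l ^ 2 * c ^ 2) := by
        rw [Finset.sum_add_distrib, ← Finset.mul_sum]
        simp [Finset.card_univ]
    _ = (Fintype.card α : ℝ) * Real.exp (l ^ 2 * c ^ 2) := by rw [h0]; ring

private lemma mcd_mgf {ι : Type*} [DecidableEq ι] [Fintype ι] {Ω : ι → Type*}
    [∀ i, Fintype (Ω i)] [∀ i, Nonempty (Ω i)] (l : ℝ) (s : Finset ι) :
    ∀ (f : (∀ j, Ω j) → ℝ) (c : ι → ℝ),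
      (∀ i ∈ s, ∀ x y : ∀ j, Ω j, (∀ j, j ≠ i → x j = y j) → |f x - f y| ≤ c i) →
      (∀ x y : ∀ j, Ω j, (∀ j ∈ s, x j = y j) → f x = f y) →
      (∑ x, f x = 0) →
      ∑ x, Real.exp (l * f x)
        ≤ (Fintype.card (∀ j, Ω j) : ℝ) * Real.exp (l ^ 2 * ∑ i ∈ s, c i ^ 2) := by
  induction s using Finset.induction_on with
  | empty =>
    intro f c hLip hDep hMean
    obtain ⟨x₀⟩ : Nonempty (∀ j, Ω j) := inferInstance
    have hcard : (0:ℝ) < (Fintype.card (∀ j, Ω j) : ℝ) := by exact_mod_cast Fintype.card_pos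
    have hconst : ∀ x, f x = f x₀ := fun x => hDep x x₀ (by simp)
    have hsum : ∑ x, f x = (Fintype.card (∀ j, Ω j) : ℝ) * f x₀ := by
      rw [Finset.sum_congr rfl fun x _ => hconst x, Finset.sum_const, Finset.card_univ,
        nsmul_eq_mul]
    have hf0 : ∀ x, f x = 0 := by
      intro x
      rw [hconst x]
      have := hsum.symm.trans hMean
      exact (mul_eq_zero.1 this).resolve_left (ne_of_gt hcard)
    simp [hf0]
  | @insert i s' hi IH =>
    intro f c hLip hDep hMean
    have hic : i ∈ insert i s' := Finset.mem_insert_self i s'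
    set e := Equiv.piSplitAt i Ω with he
    set m := (Fintype.card (Ω i) : ℝ) with hm
    have hm0 : (0:ℝ) < m := by rw [hm]; exact_mod_cast Fintype.card_pos
    have hsymm_i : ∀ p : Ω i × (∀ j : {j : ι // j ≠ i}, Ω j), e.symm p i = p.1 := by
      intro p; exact congrArg Prod.fst (e.apply_symm_apply p)
    have hsymm_ne : ∀ (p : Ω i × (∀ j : {j : ι // j ≠ i}, Ω j)) (j : {j : ι // j ≠ i}),
        e.symm p (j : ι) = p.2 j := by
      intro p j; exact congr_fun (congrArg Prod.snd (e.apply_symm_apply p)) j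
    have hupd : ∀ (p : Ω i × (∀ j : {j : ι // j ≠ i}, Ω j)) (b : Ω i),
        Function.update (e.symm p) i b = e.symm (b, p.2) := by
      intro p b
      funext j
      by_cases hj : j = i
      · subst hj
        rw [Function.update_self, hsymm_i]
      · rw [Function.update_of_ne hj, hsymm_ne p ⟨j, hj⟩, hsymm_ne (b, p.2) ⟨j, hj⟩]
    -- sum transport
    have hsum2 : ∀ F : (∀ j, Ω j) → ℝ,
        ∑ x, F x = ∑ y : ∀ j : {j : ι // j ≠ i}, Ω j, ∑ b : Ω i, F (e.symm (b, y)) := by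
      intro F
      rw [← Equiv.sum_comp e.symm F, Fintype.sum_prod_type]
      exact Finset.sum_comm
    set G : (∀ j : {j : ι // j ≠ i}, Ω j) → ℝ :=
      fun y => (∑ b : Ω i, f (e.symm (b, y))) / m with hG
    set g : (∀ j, Ω j) → ℝ := fun x => (∑ b : Ω i, f (Function.update x i b)) / m with hg
    have hgG : ∀ p : Ω i × (∀ j : {j : ι // j ≠ i}, Ω j), g (e.symm p) = G p.2 := by
      intro p
      rw [hg, hG]
      simp only []
      congr 1
      exact Finset.sum_congr rfl fun b _ => by rw [hupd p b]
    -- difference bound within a fiber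
    have hZ : ∀ (y : ∀ j : {j : ι // j ≠ i}, Ω j) (b b' : Ω i),
        |f (e.symm (b, y)) - f (e.symm (b', y))| ≤ c i := by
      intro y b b'
      refine hLip i hic _ _ fun j hj => ?_
      rw [hsymm_ne (b, y) ⟨j, hj⟩, hsymm_ne (b', y) ⟨j, hj⟩]
    -- g facts
    have hgLip : ∀ j ∈ s', ∀ x y : ∀ j, Ω j, (∀ j', j' ≠ j → x j' = y j') → |g x - g y| ≤ c j := by
      intro j hj x y hxy
      have hji : j ≠ i := fun h => hi (h ▸ hj)
      rw [hg]
      simp only []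
      rw [div_sub_div_same, ← Finset.sum_sub_distrib]
      rw [abs_div, abs_of_pos hm0, div_le_iff₀ hm0]
      calc |∑ b : Ω i, (f (Function.update x i b) - f (Function.update y i b))|
          ≤ ∑ b : Ω i, |f (Function.update x i b) - f (Function.update y i b)| :=
            Finset.abs_sum_le_sum_abs _ _
        _ ≤ ∑ _b : Ω i, c j := by
            refine Finset.sum_le_sum fun b _ => ?_
            refine hLip j (Finset.mem_insert_of_mem hj) _ _ fun j' hj' => ?_
            by_cases hj'i : j' = i
            · subst hj'i; rw [Function.update_self, Function.update_self]
            · rw [Function.update_of_ne hj'i, Function.update_of_ne hj'i]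
              exact hxy j' hj'
        _ = c j * m := by rw [Finset.sum_const, Finset.card_univ, nsmul_eq_mul, hm, mul_comm]
    have hgDep : ∀ x y : ∀ j, Ω j, (∀ j ∈ s', x j = y j) → g x = g y := by
      intro x y hxy
      rw [hg]
      simp only []
      congr 1
      refine Finset.sum_congr rfl fun b _ => ?_
      refine hDep _ _ fun j hj => ?_
      rcases Finset.mem_insert.1 hj with h | h
      · subst h; rw [Function.update_self, Function.update_self]
      · by_cases hji : j = i
        · subst hji; rw [Function.update_self, Function.update_self]
        · rw [Function.update_of_ne hji, Function.update_of_ne hji]; exact hxy j h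
    have hGsum : ∑ y : ∀ j : {j : ι // j ≠ i}, Ω j, m * G y = 0 := by
      have : ∀ y : ∀ j : {j : ι // j ≠ i}, Ω j, m * G y = ∑ b : Ω i, f (e.symm (b, y)) := by
        intro y; rw [hG]; field_simp
      rw [Finset.sum_congr rfl fun y _ => this y, ← hsum2 f, hMean]
    have hgMean : ∑ x, g x = 0 := by
      rw [hsum2 g]
      have : ∀ y : ∀ j : {j : ι // j ≠ i}, Ω j, ∑ b : Ω i, g (e.symm (b, y)) = m * G y := by
        intro y
        rw [Finset.sum_congr rfl fun b _ => hgG (b, y)]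
        simp [hm, Finset.sum_const, Finset.card_univ, nsmul_eq_mul]
      rw [Finset.sum_congr rfl fun y _ => this y, hGsum]
    -- fiberwise exponential bound
    have hfiber : ∀ y : ∀ j : {j : ι // j ≠ i}, Ω j,
        ∑ b : Ω i, Real.exp (l * f (e.symm (b, y)))
          ≤ m * Real.exp (l ^ 2 * c i ^ 2) * Real.exp (l * G y) := by
      intro y
      have hZ0 : ∑ b : Ω i, (f (e.symm (b, y)) - G y) = 0 := by
        rw [Finset.sum_sub_distrib, Finset.sum_const, Finset.card_univ, nsmul_eq_mul, ← hm, hG]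
        field_simp
        ring
      have hZb : ∀ b : Ω i, |f (e.symm (b, y)) - G y| ≤ c i := by
        intro b
        have h1 : f (e.symm (b, y)) - G y
            = (∑ b' : Ω i, (f (e.symm (b, y)) - f (e.symm (b', y)))) / m := by
          rw [Finset.sum_sub_distrib, Finset.sum_const, Finset.card_univ, nsmul_eq_mul, ← hm, hG]
          field_simp
        rw [h1, abs_div, abs_of_pos hm0, div_le_iff₀ hm0]
        calc |∑ b' : Ω i, (f (e.symm (b, y)) - f (e.symm (b', y)))|
            ≤ ∑ b' : Ω i, |f (e.symm (b, y)) - f (e.symm (b', y))| :=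
              Finset.abs_sum_le_sum_abs _ _
          _ ≤ ∑ _b' : Ω i, c i := Finset.sum_le_sum fun b' _ => hZ y b b'
          _ = c i * m := by rw [Finset.sum_const, Finset.card_univ, nsmul_eq_mul, hm, mul_comm]
      have havg := avg_exp_le (fun b : Ω i => f (e.symm (b, y)) - G y) (c i) l hZ0 hZb
      calc ∑ b : Ω i, Real.exp (l * f (e.symm (b, y)))
          = ∑ b : Ω i, Real.exp (l * (f (e.symm (b, y)) - G y)) * Real.exp (l * G y) := by
            refine Finset.sum_congr rfl fun b _ => ?_
            rw [← Real.exp_add]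
            congr 1
            ring
        _ = (∑ b : Ω i, Real.exp (l * (f (e.symm (b, y)) - G y))) * Real.exp (l * G y) := by
            rw [Finset.sum_mul]
        _ ≤ m * Real.exp (l ^ 2 * c i ^ 2) * Real.exp (l * G y) := by
            have := Real.exp_pos (l * G y)
            exact mul_le_mul_of_nonneg_right havg this.le
    -- main chain
    have hgexp : ∑ x, Real.exp (l * g x)
        = m * ∑ y : ∀ j : {j : ι // j ≠ i}, Ω j, Real.exp (l * G y) := by
      rw [hsum2 (fun x => Real.exp (l * g x))]
      rw [Finset.mul_sum]
      refine Finset.sum_congr rfl fun y _ => ?_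
      rw [Finset.sum_congr rfl fun b _ => by rw [hgG (b, y)]]
      simp [hm, Finset.sum_const, Finset.card_univ, nsmul_eq_mul]
    have hGexp_nonneg : (0:ℝ) ≤ ∑ y : ∀ j : {j : ι // j ≠ i}, Ω j, Real.exp (l * G y) :=
      Finset.sum_nonneg fun y _ => (Real.exp_pos _).le
    have hIH := IH g c hgLip hgDep hgMean
    calc ∑ x, Real.exp (l * f x)
        = ∑ y : ∀ j : {j : ι // j ≠ i}, Ω j, ∑ b : Ω i, Real.exp (l * f (e.symm (b, y))) :=
          hsum2 _
      _ ≤ ∑ y : ∀ j : {j : ι // j ≠ i}, Ω j,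
            m * Real.exp (l ^ 2 * c i ^ 2) * Real.exp (l * G y) :=
          Finset.sum_le_sum fun y _ => hfiber y
      _ = Real.exp (l ^ 2 * c i ^ 2) * (m * ∑ y, Real.exp (l * G y)) := by
          rw [Finset.mul_sum]
          rw [Finset.mul_sum]
          exact Finset.sum_congr rfl fun y _ => by ring
      _ = Real.exp (l ^ 2 * c i ^ 2) * ∑ x, Real.exp (l * g x) := by rw [hgexp]
      _ ≤ Real.exp (l ^ 2 * c i ^ 2)
            * ((Fintype.card (∀ j, Ω j) : ℝ) * Real.exp (l ^ 2 * ∑ j ∈ s', c j ^ 2)) := by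
          exact mul_le_mul_of_nonneg_left hIH (Real.exp_pos _).le
      _ = (Fintype.card (∀ j, Ω j) : ℝ) * Real.exp (l ^ 2 * ∑ j ∈ insert i s', c j ^ 2) := by
          rw [Finset.sum_insert hi,
            show l ^ 2 * (c i ^ 2 + ∑ x ∈ s', c x ^ 2)
                = l ^ 2 * c i ^ 2 + l ^ 2 * ∑ x ∈ s', c x ^ 2 from by ring,
            Real.exp_add]
          ring

private lemma mcd_tail_one {ι : Type*} [DecidableEq ι] [Fintype ι] {Ω : ι → Type*}
    [∀ i, Fintype (Ω i)] [∀ i, Nonempty (Ω i)]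
    (f : (∀ j, Ω j) → ℝ) (c : ι → ℝ) (t V : ℝ) (ht : 0 < t) (hV : 0 < V)
    (hsumc : ∑ i, c i ^ 2 ≤ V)
    (hLip : ∀ i, ∀ x y : ∀ j, Ω j, (∀ j, j ≠ i → x j = y j) → |f x - f y| ≤ c i)
    (hMean : ∑ x, f x = 0) :
    ((Finset.univ.filter (fun x : ∀ j, Ω j => t < f x)).card : ℝ)
      ≤ Real.exp (-(t ^ 2 / (4 * V))) * (Fintype.card (∀ j, Ω j) : ℝ) := by
  classical
  set N := (Fintype.card (∀ j, Ω j) : ℝ) with hN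
  set l := t / (2 * V) with hl
  have hV2 : (0:ℝ) < 2 * V := by linarith
  have hl0 : 0 < l := div_pos ht hV2
  have hdep : ∀ x y : ∀ j, Ω j, (∀ j ∈ Finset.univ, x j = y j) → f x = f y := by
    intro x y h
    have : x = y := funext fun j => h j (Finset.mem_univ j)
    rw [this]
  have hmgf := mcd_mgf l Finset.univ f c (fun i _ => hLip i) hdep hMean
  have hmgf2 : ∑ x, Real.exp (l * f x) ≤ N * Real.exp (l ^ 2 * V) := by
    refine hmgf.trans ?_
    have : Real.exp (l ^ 2 * ∑ i, c i ^ 2) ≤ Real.exp (l ^ 2 * V) :=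
      Real.exp_le_exp.2 (mul_le_mul_of_nonneg_left hsumc (sq_nonneg l))
    have hN0 : (0:ℝ) ≤ N := by positivity
    exact mul_le_mul_of_nonneg_left this hN0
  set s := Finset.univ.filter (fun x : ∀ j, Ω j => t < f x) with hs
  have hlower : (s.card : ℝ) * Real.exp (l * t) ≤ ∑ x, Real.exp (l * f x) := by
    calc (s.card : ℝ) * Real.exp (l * t) = ∑ _x ∈ s, Real.exp (l * t) := by
          rw [Finset.sum_const, nsmul_eq_mul]
      _ ≤ ∑ x ∈ s, Real.exp (l * f x) := by
          refine Finset.sum_le_sum fun x hx => ?_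
          have := (Finset.mem_filter.1 hx).2
          exact Real.exp_le_exp.2 (mul_le_mul_of_nonneg_left this.le hl0.le)
      _ ≤ ∑ x, Real.exp (l * f x) :=
          Finset.sum_le_sum_of_subset_of_nonneg (Finset.filter_subset _ _)
            (fun x _ _ => (Real.exp_pos _).le)
  have hexp : l ^ 2 * V - l * t = -(t ^ 2 / (4 * V)) := by
    rw [hl]; field_simp; ring
  have h2 : (s.card : ℝ) ≤ (N * Real.exp (l ^ 2 * V)) / Real.exp (l * t) := by
    rw [le_div_iff₀ (Real.exp_pos _)]
    exact hlower.trans hmgf2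
  calc (s.card : ℝ) ≤ (N * Real.exp (l ^ 2 * V)) / Real.exp (l * t) := h2
    _ = N * Real.exp (l ^ 2 * V - l * t) := by rw [Real.exp_sub]; ring
    _ = Real.exp (-(t ^ 2 / (4 * V))) * N := by rw [hexp]; ring

private lemma mcd_tail_two {ι : Type*} [DecidableEq ι] [Fintype ι] {Ω : ι → Type*}
    [∀ i, Fintype (Ω i)] [∀ i, Nonempty (Ω i)]
    (f : (∀ j, Ω j) → ℝ) (c : ι → ℝ) (t V : ℝ) (ht : 0 < t) (hV : 0 < V)
    (hsumc : ∑ i, c i ^ 2 ≤ V)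
    (hLip : ∀ i, ∀ x y : ∀ j, Ω j, (∀ j, j ≠ i → x j = y j) → |f x - f y| ≤ c i)
    (hMean : ∑ x, f x = 0) :
    (Nat.card {x : ∀ j, Ω j // t < |f x|} : ℝ)
      ≤ 2 * Real.exp (-(t ^ 2 / (4 * V))) * (Fintype.card (∀ j, Ω j) : ℝ) := by
  classical
  have h1 := mcd_tail_one f c t V ht hV hsumc hLip hMean
  have h2 := mcd_tail_one (fun x => -f x) c t V ht hV hsumc
    (fun i x y h => by
      calc |(fun x => -f x) x - (fun x => -f x) y| = |f x - f y| := by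
            simp only [neg_sub_neg, abs_sub_comm]
        _ ≤ c i := hLip i x y h)
    (by simpa using hMean)
  have hcard : Nat.card {x : ∀ j, Ω j // t < |f x|}
      = (Finset.univ.filter (fun x : ∀ j, Ω j => t < |f x|)).card := by
    rw [Nat.card_eq_fintype_card, Fintype.card_subtype]
  have hsub : (Finset.univ.filter (fun x : ∀ j, Ω j => t < |f x|)).card
      ≤ (Finset.univ.filter (fun x : ∀ j, Ω j => t < f x)).card
        + (Finset.univ.filter (fun x : ∀ j, Ω j => t < -f x)).card := by
    calc (Finset.univ.filter (fun x : ∀ j, Ω j => t < |f x|)).card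
        ≤ ((Finset.univ.filter (fun x : ∀ j, Ω j => t < f x))
            ∪ (Finset.univ.filter (fun x : ∀ j, Ω j => t < -f x))).card := by
          refine Finset.card_le_card fun x hx => ?_
          have hx2 := (Finset.mem_filter.1 hx).2
          rcases lt_abs.1 hx2 with h | h
          · exact Finset.mem_union_left _ (Finset.mem_filter.2 ⟨Finset.mem_univ _, h⟩)
          · exact Finset.mem_union_right _ (Finset.mem_filter.2 ⟨Finset.mem_univ _, h⟩)
      _ ≤ _ := Finset.card_union_le _ _
  rw [hcard]
  push_cast
  calc ((Finset.univ.filter (fun x : ∀ j, Ω j => t < |f x|)).card : ℝ)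
      ≤ ((Finset.univ.filter (fun x : ∀ j, Ω j => t < f x)).card : ℝ)
        + ((Finset.univ.filter (fun x : ∀ j, Ω j => t < -f x)).card : ℝ) := by
        exact_mod_cast hsub
    _ ≤ Real.exp (-(t ^ 2 / (4 * V))) * (Fintype.card (∀ j, Ω j) : ℝ)
        + Real.exp (-(t ^ 2 / (4 * V))) * (Fintype.card (∀ j, Ω j) : ℝ) := add_le_add h1 h2
    _ = 2 * Real.exp (-(t ^ 2 / (4 * V))) * (Fintype.card (∀ j, Ω j) : ℝ) := by ring

private lemma mcd_tail_blocks {E B : Type*} [Fintype E] [DecidableEq E] [Fintype B]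
    [DecidableEq B]
    (π : E → B) (f : (E → Bool) → ℝ) (c : B → ℝ) (t V : ℝ) (ht : 0 < t) (hV : 0 < V)
    (hsumc : ∑ b, c b ^ 2 ≤ V)
    (hLip : ∀ b, ∀ x y : E → Bool, (∀ e, π e ≠ b → x e = y e) → |f x - f y| ≤ c b)
    (hMean : ∑ x, f x = 0) :
    (Nat.card {x : E → Bool // t < |f x|} : ℝ)
      ≤ 2 * Real.exp (-(t ^ 2 / (4 * V))) * (Fintype.card (E → Bool) : ℝ) := by
  classical
  set Ω : B → Type _ := fun b => ({e : E // π e = b} → Bool) with hΩ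
  let q : (E → Bool) ≃ (∀ b, Ω b) :=
    { toFun := fun x b e => x e.1
      invFun := fun y e => y (π e) ⟨e, rfl⟩
      left_inv := fun x => rfl
      right_inv := fun y => by
        funext b e
        obtain ⟨e, rfl⟩ := e
        rfl }
  have hLip' : ∀ b, ∀ x y : ∀ b, Ω b, (∀ b', b' ≠ b → x b' = y b')
      → |f (q.symm x) - f (q.symm y)| ≤ c b := by
    intro b x y h
    refine hLip b _ _ fun e he => ?_
    exact congrFun (h (π e) he) ⟨e, rfl⟩
  have hMean' : ∑ y : ∀ b, Ω b, f (q.symm y) = 0 := by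
    rw [Equiv.sum_comp q.symm f]
    exact hMean
  have h := mcd_tail_two (fun y => f (q.symm y)) c t V ht hV hsumc hLip' hMean'
  have hc1 : Nat.card {x : E → Bool // t < |f x|}
      = Nat.card {y : ∀ b, Ω b // t < |f (q.symm y)|} :=
    Nat.card_congr (Equiv.subtypeEquiv q (fun x => by rw [q.symm_apply_apply]))
  have hc2 : Fintype.card (∀ b, Ω b) = Fintype.card (E → Bool) :=
    Fintype.card_congr q.symm
  rw [hc1, ← hc2]
  exact h

/-- `deg_G(I)`: the number of sets `S ⊆ [n]` with `I ⊆ S`, `|S| = 2r`, and `S` a clique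
of `G`. -/
noncomputable def degG {n : ℕ} (G : SimpleGraph (Fin n)) (r : ℕ) (I : Finset (Fin n)) : ℕ :=
  Nat.card {S : Finset (Fin n) // I ⊆ S ∧ S.card = 2 * r ∧ G.IsClique (S : Set (Fin n))}

private abbrev EI (n : ℕ) (I : Finset (Fin n)) : Type :=
  {p : Fin n × Fin n // p.1 ∉ I ∧ (p.2 ∈ I ∨ p.2 < p.1)}

private lemma orient_excl {n : ℕ} {I : Finset (Fin n)} {a b : Fin n}
    (h1 : a ∉ I ∧ (b ∈ I ∨ b < a)) (h2 : b ∉ I ∧ (a ∈ I ∨ a < b)) : False := by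
  rcases h1.2 with hb | hb
  · exact h2.1 hb
  · rcases h2.2 with ha | ha
    · exact h1.1 ha
    · exact absurd hb (asymm ha)

private lemma orient_exists {n : ℕ} {I : Finset (Fin n)} {a b : Fin n} (hab : a ≠ b)
    (hnot : ¬(a ∈ I ∧ b ∈ I)) :
    (a ∉ I ∧ (b ∈ I ∨ b < a)) ∨ (b ∉ I ∧ (a ∈ I ∨ a < b)) := by
  by_cases ha : a ∈ I <;> by_cases hb : b ∈ I
  · exact absurd ⟨ha, hb⟩ hnot
  · exact Or.inr ⟨hb, Or.inl ha⟩
  · exact Or.inl ⟨ha, Or.inl hb⟩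
  · rcases lt_or_gt_of_ne hab with h | h
    · exact Or.inr ⟨hb, Or.inr h⟩
    · exact Or.inl ⟨ha, Or.inr h⟩

private lemma orient_ne {n : ℕ} {I : Finset (Fin n)} {a b : Fin n}
    (h : a ∉ I ∧ (b ∈ I ∨ b < a)) : a ≠ b := by
  rcases h.2 with hb | hb
  · exact fun he => h.1 (he ▸ hb)
  · exact fun he => absurd hb (he ▸ lt_irrefl a)

private def extBit {n : ℕ} (I : Finset (Fin n)) (x : EI n I → Bool) (p : Fin n × Fin n) : Bool :=
  if h : p.1 ∉ I ∧ (p.2 ∈ I ∨ p.2 < p.1) then x ⟨p, h⟩ else false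

private def graphOf {n : ℕ} (I : Finset (Fin n)) (x : EI n I → Bool) : SimpleGraph (Fin n) where
  Adj a b := a ≠ b ∧ ((a ∈ I ∧ b ∈ I) ∨ extBit I x (a, b) = true ∨ extBit I x (b, a) = true)
  symm := by
    constructor
    intro a b h
    exact ⟨h.1.symm, by tauto⟩
  loopless := ⟨fun a h => h.1 rfl⟩

private lemma graphOf_isClique {n : ℕ} (I : Finset (Fin n)) (x : EI n I → Bool) :
    (graphOf I x).IsClique (I : Set (Fin n)) := by
  intro a ha b hb hab
  exact ⟨hab, Or.inl ⟨Finset.mem_coe.1 ha, Finset.mem_coe.1 hb⟩⟩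

private lemma graphOf_adj_e {n : ℕ} (I : Finset (Fin n)) (x : EI n I → Bool) (e : EI n I) :
    (graphOf I x).Adj e.1.1 e.1.2 ↔ x e = true := by
  obtain ⟨⟨a, b⟩, he⟩ := e
  have hab : a ≠ b := orient_ne he
  have hext1 : extBit I x (a, b) = x ⟨(a, b), he⟩ := dif_pos he
  have hext2 : extBit I x (b, a) = false := by
    rw [extBit, dif_neg]
    intro h2
    exact orient_excl he h2
  constructor
  · rintro ⟨-, h⟩
    rcases h with h | h | h
    · exact absurd h.1 he.1
    · rwa [hext1] at h
    · rw [hext2] at h; exact absurd h (by simp)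
  · intro hx
    exact ⟨hab, Or.inr (Or.inl (by rw [hext1]; exact hx))⟩

private noncomputable def graphEquiv (n : ℕ) (I : Finset (Fin n)) :
    {G : SimpleGraph (Fin n) // G.IsClique (I : Set (Fin n))} ≃ (EI n I → Bool) where
  toFun G e := @decide (G.1.Adj e.1.1 e.1.2) (Classical.propDecidable _)
  invFun x := ⟨graphOf I x, graphOf_isClique I x⟩
  left_inv := by
    classical
    rintro ⟨G, hG⟩
    refine Subtype.ext (SimpleGraph.ext ?_)
    ext a b
    show (a ≠ b ∧ _) ↔ G.Adj a b
    constructor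
    · rintro ⟨hab, h⟩
      rcases h with h | h | h
      · exact hG (Finset.mem_coe.2 h.1) (Finset.mem_coe.2 h.2) hab
      · rw [extBit] at h
        split_ifs at h with h'
        exact of_decide_eq_true h
      · rw [extBit] at h
        split_ifs at h with h'
        exact (of_decide_eq_true h).symm
    · intro hadj
      have hab : a ≠ b := G.ne_of_adj hadj
      refine ⟨hab, ?_⟩
      by_cases hboth : a ∈ I ∧ b ∈ I
      · exact Or.inl hboth
      · rcases orient_exists hab hboth with h | h
        · refine Or.inr (Or.inl ?_)
          rw [extBit, dif_pos h]
          exact decide_eq_true hadj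
        · refine Or.inr (Or.inr ?_)
          rw [extBit, dif_pos h]
          exact decide_eq_true hadj.symm
  right_inv := by
    classical
    intro x
    funext e
    show @decide ((graphOf I x).Adj e.1.1 e.1.2) (Classical.propDecidable _) = x e
    by_cases h : (graphOf I x).Adj e.1.1 e.1.2
    · rw [decide_eq_true h]
      exact ((graphOf_adj_e I x e).1 h).symm
    · rw [decide_eq_false h]
      exact (Bool.eq_false_iff.2 (fun hx => h ((graphOf_adj_e I x e).2 hx))).symm

private lemma card_supersets {α : Type*} [Fintype α] [DecidableEq α] (A : Finset α) (j : ℕ)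
    (hA : A.card ≤ j) :
    (Finset.univ.filter (fun S : Finset α => A ⊆ S ∧ S.card = j)).card
      = (Fintype.card α - A.card).choose (j - A.card) := by
  rw [← Finset.card_compl A, ← Finset.card_powersetCard]
  refine Finset.card_bij' (fun S _ => S \ A) (fun T _ => A ∪ T) ?_ ?_ ?_ ?_
  · intro S hS
    rw [Finset.mem_filter] at hS
    obtain ⟨-, hAS, hcard⟩ := hS
    rw [Finset.mem_powersetCard]
    constructor
    · intro x hx
      exact Finset.mem_compl.2 (Finset.mem_sdiff.1 hx).2
    · rw [Finset.card_sdiff_of_subset hAS, hcard]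
  · intro T hT
    rw [Finset.mem_powersetCard] at hT
    have hdisj : Disjoint A T := by
      rw [Finset.disjoint_right]
      intro x hx
      exact Finset.mem_compl.1 (hT.1 hx)
    refine Finset.mem_filter.2 ⟨Finset.mem_univ _, Finset.subset_union_left, ?_⟩
    rw [Finset.card_union_of_disjoint hdisj, hT.2]
    omega
  · intro S hS
    have hAS := (Finset.mem_filter.1 hS).2.1
    exact Finset.union_sdiff_of_subset hAS
  · intro T hT
    rw [Finset.mem_powersetCard] at hT
    have hdisj : Disjoint A T := by
      rw [Finset.disjoint_right]
      intro x hx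
      exact Finset.mem_compl.1 (hT.1 hx)
    exact Finset.union_sdiff_cancel_left hdisj

private lemma card_forced {E : Type*} [Fintype E] [DecidableEq E] (s : Finset E) :
    Fintype.card {x : E → Bool // ∀ e ∈ s, x e = true} = 2 ^ (Fintype.card E - s.card) := by
  classical
  have eqv : {x : E → Bool // ∀ e ∈ s, x e = true} ≃ ({e : E // e ∉ s} → Bool) :=
    { toFun := fun x e => x.1 e.1
      invFun := fun y => ⟨fun e => if h : e ∈ s then true else y ⟨e, h⟩, fun e he => by
        simp [he]⟩
      left_inv := fun x => Subtype.ext (funext fun e => by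
        by_cases h : e ∈ s
        · simp [h, x.2 e h]
        · simp [h])
      right_inv := fun y => funext fun e => by simp [e.2] }
  rw [Fintype.card_congr eqv, Fintype.card_fun, Fintype.card_bool]
  congr 1
  rw [Fintype.card_subtype_compl, Fintype.card_coe]

private lemma graphOf_adj {n : ℕ} (I : Finset (Fin n)) (x : EI n I → Bool) (a b : Fin n) :
    (graphOf I x).Adj a b
      ↔ (a ≠ b ∧ ((a ∈ I ∧ b ∈ I) ∨ extBit I x (a, b) = true ∨ extBit I x (b, a) = true)) :=
  Iff.rfl

open Classical in
private lemma degG_eq_filter {n : ℕ} (G : SimpleGraph (Fin n)) (r : ℕ) (I : Finset (Fin n)) :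
    degG G r I = (Finset.univ.filter
      (fun S : Finset (Fin n) =>
        I ⊆ S ∧ S.card = 2 * r ∧ G.IsClique (S : Set (Fin n)))).card := by
  classical
  rw [degG, Nat.card_eq_fintype_card, Fintype.card_subtype]

private lemma isClique_iff_bits {n : ℕ} (I : Finset (Fin n)) (x : EI n I → Bool)
    (S : Finset (Fin n)) :
    (graphOf I x).IsClique (S : Set (Fin n))
      ↔ ∀ e ∈ Finset.univ.filter (fun e : EI n I => e.1.1 ∈ S ∧ e.1.2 ∈ S), x e = true := by
  classical
  constructor
  · intro hcl e he
    obtain ⟨h1, h2⟩ := (Finset.mem_filter.1 he).2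
    have hadj := hcl (Finset.mem_coe.2 h1) (Finset.mem_coe.2 h2) (orient_ne e.2)
    exact (graphOf_adj_e I x e).1 hadj
  · intro hbits a ha b hb hab
    have ha' := Finset.mem_coe.1 ha
    have hb' := Finset.mem_coe.1 hb
    by_cases hboth : a ∈ I ∧ b ∈ I
    · exact ⟨hab, Or.inl hboth⟩
    · rcases orient_exists hab hboth with h | h
      · have hx := hbits ⟨(a, b), h⟩
          (Finset.mem_filter.2 ⟨Finset.mem_univ _, ha', hb'⟩)
        exact (graphOf_adj_e I x ⟨(a, b), h⟩).2 hx
      · have hx := hbits ⟨(b, a), h⟩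
          (Finset.mem_filter.2 ⟨Finset.mem_univ _, hb', ha'⟩)
        exact ((graphOf_adj_e I x ⟨(b, a), h⟩).2 hx).symm

private lemma card_bits {n : ℕ} (I : Finset (Fin n)) (S : Finset (Fin n)) (hIS : I ⊆ S) :
    (Finset.univ.filter (fun e : EI n I => e.1.1 ∈ S ∧ e.1.2 ∈ S)).card
      = S.card.choose 2 - I.card.choose 2 := by
  classical
  have key : (Finset.univ.filter (fun e : EI n I => e.1.1 ∈ S ∧ e.1.2 ∈ S)).card
      = ((Finset.powersetCard 2 S) \ (Finset.powersetCard 2 I)).card := by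
    refine Finset.card_bij (fun e _ => ({e.1.1, e.1.2} : Finset (Fin n))) ?_ ?_ ?_
    · intro e he
      obtain ⟨h1, h2⟩ := (Finset.mem_filter.1 he).2
      have hab : e.1.1 ≠ e.1.2 := orient_ne e.2
      rw [Finset.mem_sdiff]
      constructor
      · rw [Finset.mem_powersetCard]
        exact ⟨by
          intro z hz
          rcases Finset.mem_insert.1 hz with h | h
          · exact h ▸ h1
          · exact (Finset.mem_singleton.1 h) ▸ h2, Finset.card_pair hab⟩
      · intro hmem
        rw [Finset.mem_powersetCard] at hmem
        exact e.2.1 (hmem.1 (Finset.mem_insert_self _ _))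
    · intro e1 he1 e2 he2 heq
      have heq' : ({e1.1.1, e1.1.2} : Finset (Fin n)) = {e2.1.1, e2.1.2} := heq
      have h11 : e1.1.1 ∈ ({e2.1.1, e2.1.2} : Finset (Fin n)) := by
        rw [← heq']; exact Finset.mem_insert_self _ _
      have h12 : e1.1.2 ∈ ({e2.1.1, e2.1.2} : Finset (Fin n)) := by
        rw [← heq']
        exact Finset.mem_insert_of_mem (Finset.mem_singleton_self _)
      rcases Finset.mem_insert.1 h11 with ha | ha
      · -- e1.1.1 = e2.1.1 : same orientation
        rcases Finset.mem_insert.1 h12 with hb | hb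
        · exact absurd (ha.trans hb.symm) (orient_ne e1.2)
        · exact Subtype.ext (Prod.ext ha (Finset.mem_singleton.1 hb))
      · -- e1.1.1 = e2.1.2 : crossed, contradiction
        have ha' := Finset.mem_singleton.1 ha
        rcases Finset.mem_insert.1 h12 with hb | hb
        · exfalso
          have h1 := e1.2
          have h2 := e2.2
          rw [show e1.1 = (e2.1.2, e2.1.1) from Prod.ext ha' hb] at h1
          exact orient_excl h2 ⟨h1.1, h1.2⟩
        · exfalso
          have hb' := Finset.mem_singleton.1 hb
          exact (orient_ne e1.2) (ha'.trans hb'.symm)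
    · intro T hT
      rw [Finset.mem_sdiff, Finset.mem_powersetCard] at hT
      obtain ⟨⟨hTS, hT2⟩, hTI⟩ := hT
      obtain ⟨a, b, hab, rfl⟩ := Finset.card_eq_two.1 hT2
      have hnot : ¬(a ∈ I ∧ b ∈ I) := by
        intro hboth
        exact hTI (Finset.mem_powersetCard.2 ⟨by
          intro z hz
          rcases Finset.mem_insert.1 hz with h | h
          · exact h ▸ hboth.1
          · exact (Finset.mem_singleton.1 h) ▸ hboth.2, Finset.card_pair hab⟩)
      have haS : a ∈ S := hTS (Finset.mem_insert_self _ _)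
      have hbS : b ∈ S := hTS (Finset.mem_insert_of_mem (Finset.mem_singleton_self _))
      rcases orient_exists hab hnot with h | h
      · exact ⟨⟨(a, b), h⟩, Finset.mem_filter.2 ⟨Finset.mem_univ _, haS, hbS⟩, rfl⟩
      · exact ⟨⟨(b, a), h⟩, Finset.mem_filter.2 ⟨Finset.mem_univ _, hbS, haS⟩,
          Finset.pair_comm b a⟩
  rw [key, Finset.card_sdiff_of_subset (Finset.powersetCard_mono hIS), Finset.card_powersetCard,
    Finset.card_powersetCard]

private lemma sum_degG {n r : ℕ} (I : Finset (Fin n)) (hI : I.card ≤ 2 * r) :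
    ∑ x : EI n I → Bool, (degG (graphOf I x) r I : ℝ)
      = ((n - I.card).choose (2 * r - I.card) : ℝ)
        * (2 : ℝ) ^ (Fintype.card (EI n I) - ((2 * r).choose 2 - I.card.choose 2)) := by
  classical
  set 𝒮 := Finset.univ.filter (fun S : Finset (Fin n) => I ⊆ S ∧ S.card = 2 * r) with h𝒮
  have step1 : ∀ x : EI n I → Bool, (degG (graphOf I x) r I : ℝ)
      = ∑ S ∈ 𝒮, (if (graphOf I x).IsClique (S : Set (Fin n)) then (1:ℝ) else 0) := by
    intro x
    rw [Finset.sum_boole, degG_eq_filter, h𝒮, Finset.filter_filter]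
    congr 1
    exact congrArg Finset.card (Finset.filter_congr fun S _ => by tauto)
  rw [Finset.sum_congr rfl fun x _ => step1 x, Finset.sum_comm]
  have step2 : ∀ S ∈ 𝒮,
      (∑ x : EI n I → Bool,
        if (graphOf I x).IsClique (S : Set (Fin n)) then (1:ℝ) else 0)
      = (2 : ℝ) ^ (Fintype.card (EI n I) - ((2 * r).choose 2 - I.card.choose 2)) := by
    intro S hS
    obtain ⟨hIS, hcard⟩ := (Finset.mem_filter.1 hS).2
    rw [Finset.sum_boole]
    have : Finset.univ.filter (fun x : EI n I → Bool => (graphOf I x).IsClique (S : Set (Fin n)))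
        = Finset.univ.filter (fun x : EI n I → Bool =>
            ∀ e ∈ Finset.univ.filter (fun e : EI n I => e.1.1 ∈ S ∧ e.1.2 ∈ S), x e = true) := by
      apply Finset.filter_congr
      intro x _
      exact isClique_iff_bits I x S
    rw [this]
    have hcf : (Finset.univ.filter (fun x : EI n I → Bool =>
        ∀ e ∈ Finset.univ.filter (fun e : EI n I => e.1.1 ∈ S ∧ e.1.2 ∈ S), x e = true)).card
        = Fintype.card {x : EI n I → Bool //
            ∀ e ∈ Finset.univ.filter (fun e : EI n I => e.1.1 ∈ S ∧ e.1.2 ∈ S), x e = true} :=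
      (Fintype.card_subtype _).symm
    rw [hcf, card_forced, card_bits I S hIS, hcard]
    norm_num
  rw [Finset.sum_congr rfl step2, Finset.sum_const, nsmul_eq_mul]
  congr 1
  rw [h𝒮, card_supersets I (2 * r) hI, Fintype.card_fin]


private lemma degG_lip {n r : ℕ} (I : Finset (Fin n)) (v : Fin n) (x y : EI n I → Bool)
    (hxy : ∀ e : EI n I, e.1.1 ≠ v → x e = y e) :
    |(degG (graphOf I x) r I : ℝ) - (degG (graphOf I y) r I : ℝ)|
      ≤ ((Finset.univ.filter
          (fun S : Finset (Fin n) => insert v I ⊆ S ∧ S.card = 2 * r)).card : ℝ) := by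
  classical
  have hext : ∀ a b : Fin n, a ≠ v → extBit I x (a, b) = extBit I y (a, b) := by
    intro a b ha
    rw [extBit, extBit]
    split_ifs with h
    · exact hxy ⟨(a, b), h⟩ ha
    · rfl
  have hadj : ∀ a b : Fin n, a ≠ v → b ≠ v →
      ((graphOf I x).Adj a b ↔ (graphOf I y).Adj a b) := by
    intro a b ha hb
    rw [graphOf_adj, graphOf_adj, hext a b ha, hext b a hb]
  have hclq : ∀ S : Finset (Fin n), v ∉ S →
      ((graphOf I x).IsClique (S : Set (Fin n))
        ↔ (graphOf I y).IsClique (S : Set (Fin n))) := by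
    intro S hv
    have hne : ∀ a : Fin n, a ∈ (S : Set (Fin n)) → a ≠ v := by
      intro a ha hav
      exact hv (Finset.mem_coe.1 (hav ▸ ha))
    constructor <;> intro h a ha b hb hab
    · exact (hadj a b (hne a ha) (hne b hb)).1 (h ha hb hab)
    · exact (hadj a b (hne a ha) (hne b hb)).2 (h ha hb hab)
  rw [degG_eq_filter, degG_eq_filter]
  set A := Finset.univ.filter (fun S : Finset (Fin n) =>
    I ⊆ S ∧ S.card = 2 * r ∧ (graphOf I x).IsClique (S : Set (Fin n))) with hA
  set B := Finset.univ.filter (fun S : Finset (Fin n) =>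
    I ⊆ S ∧ S.card = 2 * r ∧ (graphOf I y).IsClique (S : Set (Fin n))) with hB
  set D := Finset.univ.filter
    (fun S : Finset (Fin n) => insert v I ⊆ S ∧ S.card = 2 * r) with hD
  have hAB : A \ B ⊆ D := by
    intro S hS
    rw [Finset.mem_sdiff, hA, hB, Finset.mem_filter, Finset.mem_filter] at hS
    obtain ⟨⟨-, h1, h2, h3⟩, hnB⟩ := hS
    have hvS : v ∈ S := by
      by_contra hv
      exact hnB ⟨Finset.mem_univ _, h1, h2, (hclq S hv).1 h3⟩
    exact Finset.mem_filter.2 ⟨Finset.mem_univ _, Finset.insert_subset hvS h1, h2⟩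
  have hBA : B \ A ⊆ D := by
    intro S hS
    rw [Finset.mem_sdiff, hA, hB, Finset.mem_filter, Finset.mem_filter] at hS
    obtain ⟨⟨-, h1, h2, h3⟩, hnA⟩ := hS
    have hvS : v ∈ S := by
      by_contra hv
      exact hnA ⟨Finset.mem_univ _, h1, h2, (hclq S hv).2 h3⟩
    exact Finset.mem_filter.2 ⟨Finset.mem_univ _, Finset.insert_subset hvS h1, h2⟩
  have h1 : A.card ≤ D.card + B.card :=
    le_trans Finset.card_le_card_sdiff_add_card
      (Nat.add_le_add_right (Finset.card_le_card hAB) _)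
  have h2 : B.card ≤ D.card + A.card :=
    le_trans Finset.card_le_card_sdiff_add_card
      (Nat.add_le_add_right (Finset.card_le_card hBA) _)
  rw [abs_sub_le_iff]
  constructor
  · have h1' : (A.card : ℝ) ≤ (D.card : ℝ) + (B.card : ℝ) := by exact_mod_cast h1
    linarith
  · have h2' : (B.card : ℝ) ≤ (D.card : ℝ) + (A.card : ℝ) := by exact_mod_cast h2
    linarith

private lemma numeric_final {l d : ℝ} (hl : l < 0) (hd : d < 1) :
    -(16 * (3 - l) ^ 2) < l - d := by nlinarith

set_option maxHeartbeats 1000000 in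
/-- Let `r ≥ 1`, `d = 2r`, and `I ⊆ [n]` with `|I| ≤ d`. For every
`ε ∈ (0,1)`, if `n ≥ 4d²·2^{2d}·(3 − ln ε)²`, then for `G ← G(n,1/2)` (uniform over all
graphs on `[n]`), conditioned on `I` being a clique of `G`, the probability that
`|deg_G(I) − 2^{C(|I|,2) − C(d,2)}·C(n−|I|, d−|I|)| > 8·(3 − ln ε)·n^{d−|I|−1/2}` is
less than `ε`. -/
theorem degG_concentration (n r : ℕ) (hr : 1 ≤ r) (I : Finset (Fin n))
    (hI : I.card ≤ 2 * r) (ε : ℝ) (hε : ε ∈ Set.Ioo (0 : ℝ) 1)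
    (hn : 4 * ((2 * r : ℕ) : ℝ) ^ 2 * (2 : ℝ) ^ (2 * (2 * r)) * (3 - Real.log ε) ^ 2
        ≤ (n : ℝ)) :
    (Nat.card {G : SimpleGraph (Fin n) //
        G.IsClique (I : Set (Fin n)) ∧
        8 * (3 - Real.log ε) * (n : ℝ) ^ (((2 * r : ℕ) : ℝ) - (I.card : ℝ) - 1/2)
          < |(degG G r I : ℝ)
              - (2 : ℝ) ^ ((Nat.choose I.card 2 : ℤ) - (Nat.choose (2 * r) 2 : ℤ))
                * (Nat.choose (n - I.card) (2 * r - I.card) : ℝ)|} : ℝ)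
      / (Nat.card {G : SimpleGraph (Fin n) // G.IsClique (I : Set (Fin n))} : ℝ)
      < ε := by
  classical
  obtain ⟨hε0, hε1⟩ := hε
  have hlog : Real.log ε < 0 := Real.log_neg hε0 hε1
  have hL3 : (3:ℝ) ≤ 3 - Real.log ε := by linarith
  have hA2 : (2:ℝ) ≤ ((2 * r : ℕ) : ℝ) := by exact_mod_cast (by omega : 2 ≤ 2 * r)
  have hpow1 : (1:ℝ) ≤ (2:ℝ) ^ (2 * (2 * r)) := one_le_pow₀ (by norm_num)
  have hnn : ((2 * r : ℕ) : ℝ) ≤ (n : ℝ) := by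
    have hL9 : (9:ℝ) ≤ (3 - Real.log ε) ^ 2 := by nlinarith
    have hP : (1:ℝ) ≤ 2 ^ (2 * (2 * r)) * (3 - Real.log ε) ^ 2 := by nlinarith
    have hprod := mul_le_mul_of_nonneg_left hP
      (by positivity : (0:ℝ) ≤ 4 * ((2 * r : ℕ) : ℝ) ^ 2)
    nlinarith [hA2, hprod, hn]
  have hn2r : 2 * r ≤ n := by exact_mod_cast hnn
  have hn1 : 0 < n := by omega
  have hn0 : (0:ℝ) < (n : ℝ) := by exact_mod_cast hn1
  set μ : ℝ := (2 : ℝ) ^ ((Nat.choose I.card 2 : ℤ) - (Nat.choose (2 * r) 2 : ℤ))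
      * (Nat.choose (n - I.card) (2 * r - I.card) : ℝ) with hμ
  set t : ℝ := 8 * (3 - Real.log ε)
      * (n : ℝ) ^ (((2 * r : ℕ) : ℝ) - (I.card : ℝ) - 1/2) with htdef
  have ht0 : 0 < t := by
    rw [htdef]
    have := Real.rpow_pos_of_pos hn0 (((2 * r : ℕ) : ℝ) - (I.card : ℝ) - 1/2)
    nlinarith
  by_cases hik : I.card = 2 * r
  · -- degenerate case |I| = 2r : the bad event is empty
    have hempty : IsEmpty {G : SimpleGraph (Fin n) //
        G.IsClique (I : Set (Fin n)) ∧ t < |(degG G r I : ℝ) - μ|} := by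
      constructor
      rintro ⟨G, hG, habs⟩
      have hdeg : degG G r I = 1 := by
        rw [degG]
        haveI : Unique {S : Finset (Fin n) //
            I ⊆ S ∧ S.card = 2 * r ∧ G.IsClique (S : Set (Fin n))} := by
          refine ⟨⟨⟨I, subset_rfl, hik, hG⟩⟩, ?_⟩
          rintro ⟨S, h1, h2, h3⟩
          have hSI : S = I := (Finset.eq_of_subset_of_card_le h1 (by omega)).symm
          exact Subtype.ext hSI
        exact Nat.card_unique
      have hμ1 : μ = 1 := by
        rw [hμ, hik]
        simp
      rw [hdeg, hμ1] at habs
      simp at habs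
      linarith
    rw [Nat.card_of_isEmpty, Nat.cast_zero, zero_div]
    exact hε0
  · -- main case |I| < 2r
    set k := 2 * r - I.card with hk
    have hk1 : 1 ≤ k := by omega
    set F : (EI n I → Bool) → ℝ := fun x => (degG (graphOf I x) r I : ℝ) - μ with hF
    set c : ℝ := ((n - I.card - 1).choose (k - 1) : ℝ) with hc
    set V : ℝ := (n : ℝ) ^ (2 * k - 1) with hVdef
    have hV0 : (0:ℝ) < V := by rw [hVdef]; positivity
    set π : EI n I → {v : Fin n // v ∉ I} := fun e => ⟨e.1.1, e.2.1⟩ with hπ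
    -- numerator transport
    have hnum : Nat.card {G : SimpleGraph (Fin n) //
          G.IsClique (I : Set (Fin n)) ∧ t < |(degG G r I : ℝ) - μ|}
        = Nat.card {x : EI n I → Bool // t < |F x|} := by
      refine Nat.card_congr (Equiv.trans
        (Equiv.subtypeSubtypeEquivSubtypeInter
          (fun G : SimpleGraph (Fin n) => G.IsClique (I : Set (Fin n)))
          (fun G => t < |(degG G r I : ℝ) - μ|)).symm ?_)
      refine Equiv.subtypeEquiv (graphEquiv n I) ?_
      intro g
      have h1 : graphOf I ((graphEquiv n I) g) = g.1 :=
        congrArg Subtype.val ((graphEquiv n I).symm_apply_apply g)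
      rw [hF]
      constructor
      · intro h
        simpa [h1] using h
      · intro h
        simpa [h1] using h
    have hden : Nat.card {G : SimpleGraph (Fin n) // G.IsClique (I : Set (Fin n))}
        = Fintype.card (EI n I → Bool) := by
      rw [Nat.card_congr (graphEquiv n I), Nat.card_eq_fintype_card]
    -- mean zero
    have hci : I.card.choose 2 ≤ (2 * r).choose 2 := Nat.choose_le_choose 2 hI
    have hmE : (2 * r).choose 2 - I.card.choose 2 ≤ Fintype.card (EI n I) := by
      obtain ⟨S₀, hIS₀, hS₀⟩ := Finset.exists_superset_card_eq hI
        (by rw [Fintype.card_fin]; exact hn2r)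
      calc (2 * r).choose 2 - I.card.choose 2
          = (Finset.univ.filter (fun e : EI n I => e.1.1 ∈ S₀ ∧ e.1.2 ∈ S₀)).card := by
            rw [card_bits I S₀ hIS₀, hS₀]
        _ ≤ Fintype.card (EI n I) := by
            rw [← Finset.card_univ]
            exact Finset.card_le_card (Finset.subset_univ _)
    have hmean : ∑ x : EI n I → Bool, F x = 0 := by
      rw [hF]
      rw [Finset.sum_sub_distrib, sum_degG I hI, Finset.sum_const, Finset.card_univ,
        nsmul_eq_mul]
      rw [hμ]
      have hzpow : (2:ℝ) ^ ((I.card.choose 2 : ℤ) - ((2 * r).choose 2 : ℤ))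
          = ((2:ℝ) ^ ((2 * r).choose 2 - I.card.choose 2))⁻¹ := by
        rw [show (I.card.choose 2 : ℤ) - ((2 * r).choose 2 : ℤ)
            = -(((2 * r).choose 2 - I.card.choose 2 : ℕ) : ℤ) by omega, zpow_neg, zpow_natCast]
      have hNcard : (Fintype.card (EI n I → Bool) : ℝ) = 2 ^ Fintype.card (EI n I) := by
        rw [Fintype.card_fun, Fintype.card_bool]
        push_cast
        ring
      rw [hzpow, hNcard, pow_sub₀ (2:ℝ) (by norm_num) hmE]
      ring
    -- Lipschitz
    have hLip : ∀ b : {v : Fin n // v ∉ I}, ∀ x y : EI n I → Bool,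
        (∀ e, π e ≠ b → x e = y e) → |F x - F y| ≤ (fun _ : {v : Fin n // v ∉ I} => c) b := by
      intro b x y h
      have h' : ∀ e : EI n I, e.1.1 ≠ b.1 → x e = y e := by
        intro e he
        refine h e fun hpe => he ?_
        have := congrArg Subtype.val hpe
        exact this
      have hd := degG_lip (r := r) I b.1 x y h'
      have heq : F x - F y
          = (degG (graphOf I x) r I : ℝ) - (degG (graphOf I y) r I : ℝ) := by
        rw [hF]; ring
      rw [heq]
      refine hd.trans (le_of_eq ?_)
      rw [card_supersets (insert b.1 I) (2 * r)
        (by rw [Finset.card_insert_of_notMem b.2]; omega)]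
      rw [Finset.card_insert_of_notMem b.2, Fintype.card_fin, hc]
      congr 2 <;> omega
    -- sum of squared Lipschitz constants
    have hsumc : ∑ _b : {v : Fin n // v ∉ I}, c ^ 2 ≤ V := by
      rw [Finset.sum_const, Finset.card_univ, nsmul_eq_mul]
      have hcardB : Fintype.card {v : Fin n // v ∉ I} = n - I.card := by
        rw [Fintype.card_subtype_compl, Fintype.card_fin, Fintype.card_coe]
      rw [hcardB, hc, hVdef]
      have hnat : (n - I.card) * ((n - I.card - 1).choose (k - 1)) ^ 2 ≤ n ^ (2 * k - 1) := by
        have h1 : (n - I.card - 1).choose (k - 1) ≤ (n - I.card - 1) ^ (k - 1) :=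
          Nat.choose_le_pow _ _
        have h2 : (n - I.card - 1) ^ (k - 1) ≤ n ^ (k - 1) :=
          Nat.pow_le_pow_left (by omega) _
        calc (n - I.card) * ((n - I.card - 1).choose (k - 1)) ^ 2
            ≤ n * (n ^ (k - 1)) ^ 2 :=
              Nat.mul_le_mul (by omega) (Nat.pow_le_pow_left (h1.trans h2) 2)
          _ = n ^ (2 * (k - 1) + 1) := by
              rw [← pow_mul, ← pow_succ']
              congr 1
              ring
          _ = n ^ (2 * k - 1) := by congr 1; omega
      calc ((n - I.card : ℕ) : ℝ) * ((n - I.card - 1).choose (k - 1) : ℝ) ^ 2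
          = (((n - I.card) * ((n - I.card - 1).choose (k - 1)) ^ 2 : ℕ) : ℝ) := by
            push_cast; ring
        _ ≤ ((n ^ (2 * k - 1) : ℕ) : ℝ) := Nat.cast_le.2 hnat
        _ = (n:ℝ) ^ (2 * k - 1) := by push_cast; ring
    have htail := mcd_tail_blocks π F (fun _ => c) t V ht0 hV0 hsumc hLip hmean
    -- the exponent
    have hexp : t ^ 2 / (4 * V) = 16 * (3 - Real.log ε) ^ 2 := by
      have he1 : (((2 * r : ℕ) : ℝ) - (I.card : ℝ) - 1/2)
          + (((2 * r : ℕ) : ℝ) - (I.card : ℝ) - 1/2) = ((2 * k - 1 : ℕ) : ℝ) := by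
        have h1 : ((2 * k - 1 : ℕ) : ℝ) = 2 * (k:ℝ) - 1 := by
          push_cast [Nat.cast_sub (by omega : 1 ≤ 2 * k)]
          ring
        have h2 : (k : ℝ) = ((2 * r : ℕ) : ℝ) - (I.card : ℝ) := by
          rw [hk]
          push_cast [Nat.cast_sub hI]
          ring
        rw [h1, h2]
        ring
      have ht2 : t ^ 2 = 64 * (3 - Real.log ε) ^ 2 * V := by
        rw [htdef, hVdef, mul_pow, mul_pow, ← Real.rpow_natCast (n:ℝ) (2 * k - 1), ← he1,
          Real.rpow_add hn0]
        ring
      rw [ht2]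
      field_simp
      ring
    have hfin : 2 * Real.exp (-(t ^ 2 / (4 * V))) < ε := by
      rw [hexp]
      have hlog2 : Real.log 2 < 1 := by
        have := Real.log_two_lt_d9
        linarith
      have hlt : -(16 * (3 - Real.log ε) ^ 2) < Real.log (ε / 2) := by
        rw [Real.log_div (ne_of_gt hε0) (by norm_num)]
        exact numeric_final hlog hlog2
      have h2 := Real.exp_lt_exp.2 hlt
      rw [Real.exp_log (by positivity : (0:ℝ) < ε / 2)] at h2
      linarith
    -- finish
    rw [hnum, hden]
    have hN0 : (0:ℝ) < (Fintype.card (EI n I → Bool) : ℝ) := by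
      exact_mod_cast Fintype.card_pos
    rw [div_lt_iff₀ hN0]
    calc (Nat.card {x : EI n I → Bool // t < |F x|} : ℝ)
        ≤ 2 * Real.exp (-(t ^ 2 / (4 * V))) * (Fintype.card (EI n I → Bool) : ℝ) := htail
      _ < ε * (Fintype.card (EI n I → Bool) : ℝ) := by
          exact mul_lt_mul_of_pos_right hfin hN0
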